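/- Let f : ℝⁿ → ℝ be a positive Borel density. If for every y ∈ ℝⁿ the map x ↦ f(x+y)/f(x) is convex, then x ↦ 1/f(x) is convex on ℝⁿ. -/
import Mathlib


open MeasureTheory

theorem stmt8 {n : ℕ} (f : (Fin n → ℝ) → ℝ)
    (hmeas : Measurable f) (hpos : ∀ x, 0 < f x)
    (hint : ∫ x, f x = 1)
    (hconv : ∀ y : Fin n → ℝ, ConvexOn ℝ Set.univ (fun x => f (x + y) / f x)) :
    ConvexOn ℝ Set.univ (fun x => (f x)⁻¹) := by
  have hf_int : Integrable f := integrable_of_integral_eq_one hint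
  have hti : ∀ w : Fin n → ℝ, Integrable (fun y => f (w + y)) := by
    intro w
    exact ((measurePreserving_add_left volume w).integrable_comp
      hmeas.aestronglyMeasurable).mpr hf_int
  have key : ∀ w : Fin n → ℝ, ∫ y, f (w + y) / f w = (f w)⁻¹ := by
    intro w
    rw [show (fun y => f (w + y) / f w) = fun y => f (w + y) * (f w)⁻¹ by
      funext y; rw [div_eq_mul_inv]]
    rw [integral_mul_const]
    rw [show (fun y => f (w + y)) = fun y => f (y + w) by funext y; rw [add_comm]]
    rw [integral_add_right_eq_self f w, hint, one_mul]
  have hti' : ∀ w : Fin n → ℝ, Integrable (fun y => f (w + y) / f w) := by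
    intro w
    simpa [div_eq_mul_inv] using (hti w).mul_const (f w)⁻¹
  refine ⟨convex_univ, ?_⟩
  intro x _ z _ a b ha hb hab
  have h1 : (f (a • x + b • z))⁻¹ = ∫ y, f ((a • x + b • z) + y) / f (a • x + b • z) :=
    (key _).symm
  have h2 : ∫ y, f ((a • x + b • z) + y) / f (a • x + b • z)
      ≤ ∫ y, (a * (f (x + y) / f x) + b * (f (z + y) / f z)) := by
    apply integral_mono (hti' _)
    · exact (((hti' x).const_mul a).add ((hti' z).const_mul b))
    · intro y
      have := (hconv y).2 (Set.mem_univ x) (Set.mem_univ z) ha hb hab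
      simpa [smul_eq_mul] using this
  have h3 : ∫ y, (a * (f (x + y) / f x) + b * (f (z + y) / f z))
      = a * (f x)⁻¹ + b * (f z)⁻¹ := by
    rw [integral_add ((hti' x).const_mul a) ((hti' z).const_mul b),
      integral_const_mul, integral_const_mul, key, key]
  simp only [smul_eq_mul]
  calc (f (a • x + b • z))⁻¹ ≤ a * (f x)⁻¹ + b * (f z)⁻¹ := by rw [h1]; rw [← h3]; exact h2
    _ = a * (f x)⁻¹ + b * (f z)⁻¹ := rfl
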